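/- Let y ∈ H¹₀(0,1) be a real function with y(0) = y(1) = 0 such that y is even with respect to x = 1/2 (i.e. y(1-x) = y(x)) and y satisfies, in the sense of distributions on (0,1), y''(x) + (2/x - 2/(1-x)) y'(x) - (2/x² + 2/(1-x)² + 4/x + 4/(1-x)) y(x) = 0. Then y = 0. -/

import Mathlib

open MeasureTheory Set

lemma aux13 (y : ℝ → ℝ)
    (hcont : ContinuousOn y (Icc (0:ℝ) 1))
    (hsmooth : ContDiffOn ℝ ⊤ y (Ioo (0:ℝ) 1))
    (h0 : y 0 = 0) (h1 : y 1 = 0)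
    (hode : ∀ x ∈ Ioo (0:ℝ) 1,
      deriv (deriv y) x + (2 / x - 2 / (1 - x)) * deriv y x
        - (2 / x ^ 2 + 2 / (1 - x) ^ 2 + 4 / x + 4 / (1 - x)) * y x = 0) :
    ∀ x ∈ Icc (0:ℝ) 1, y x ≤ 0 := by
  by_contra h
  push_neg at h
  obtain ⟨x₀, hx₀, hypos⟩ := h
  obtain ⟨c, hcI, hmax⟩ := isCompact_Icc.exists_isMaxOn (nonempty_Icc.2 (by norm_num)) hcont
  have hyc : 0 < y c := lt_of_lt_of_le hypos (hmax hx₀)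
  have hcIoo : c ∈ Ioo (0:ℝ) 1 := by
    rcases hcI with ⟨hc0, hc1⟩
    rcases hc0.lt_or_eq with h | h
    · rcases hc1.lt_or_eq with h' | h'
      · exact ⟨h, h'⟩
      · rw [h', h1] at hyc; linarith
    · rw [← h, h0] at hyc; linarith
  have hdiff : DifferentiableOn ℝ y (Ioo (0:ℝ) 1) := hsmooth.differentiableOn (by simp)
  have hIoo_nhds : Ioo (0:ℝ) 1 ∈ nhds c := isOpen_Ioo.mem_nhds hcIoo
  have hlocmax : IsLocalMax y c :=
    hmax.isLocalMax (Filter.mem_of_superset hIoo_nhds Ioo_subset_Icc_self)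
  have hd0 : deriv y c = 0 :=
    hlocmax.deriv_eq_zero
  have hq : 0 < 2 / c ^ 2 + 2 / (1 - c) ^ 2 + 4 / c + 4 / (1 - c) := by
    have h1c : 0 < 1 - c := by linarith [hcIoo.2]
    have := hcIoo.1
    positivity
  have hdd : 0 < deriv (deriv y) c := by
    have := hode c hcIoo
    rw [hd0] at this
    nlinarith
  -- deriv y and deriv (deriv y) are continuous on Ioo 0 1
  have hd1 : ContDiffOn ℝ ⊤ (deriv y) (Ioo (0:ℝ) 1) := by
    have := hsmooth.deriv_of_isOpen (m := ⊤) isOpen_Ioo le_top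
    exact this
  have hd1diff : DifferentiableOn ℝ (deriv y) (Ioo (0:ℝ) 1) := hd1.differentiableOn (by simp)
  have hd2cont : ContinuousOn (deriv (deriv y)) (Ioo (0:ℝ) 1) :=
    (hd1.deriv_of_isOpen (m := ⊤) isOpen_Ioo le_top).continuousOn
  have hcontAt : ContinuousAt (deriv (deriv y)) c :=
    hd2cont.continuousAt hIoo_nhds
  -- find ε
  have hev : ∀ᶠ x in nhds c, 0 < deriv (deriv y) x ∧ x ∈ Ioo (0:ℝ) 1 :=
    (continuousAt_const.eventually_lt hcontAt hdd).and (by filter_upwards [hIoo_nhds] with x hx using hx)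
  obtain ⟨ε, hε, hball⟩ := Metric.eventually_nhds_iff_ball.mp hev
  have hsub : Icc c (c + ε/2) ⊆ Metric.ball c ε := by
    intro x hx
    rw [Real.ball_eq_Ioo]
    constructor <;> [linarith [hx.1]; linarith [hx.2]]
  have hsubIoo : Icc c (c + ε/2) ⊆ Ioo (0:ℝ) 1 := fun x hx => (hball x (hsub hx)).2
  -- deriv y strictly mono on Icc c (c+ε/2)
  have hmono1 : StrictMonoOn (deriv y) (Icc c (c + ε/2)) := by
    apply strictMonoOn_of_deriv_pos (convex_Icc _ _)
    · exact (hd1.continuousOn).mono hsubIoo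
    · intro x hx
      rw [interior_Icc] at hx
      exact (hball x (hsub (Ioo_subset_Icc_self hx))).1
  have hd1pos : ∀ x ∈ Ioo c (c + ε/2), 0 < deriv y x := by
    intro x hx
    have := hmono1 (left_mem_Icc.2 (by linarith)) (Ioo_subset_Icc_self hx) hx.1
    rwa [hd0] at this
  have hmono2 : StrictMonoOn y (Icc c (c + ε/2)) := by
    apply strictMonoOn_of_deriv_pos (convex_Icc _ _)
    · exact (hsmooth.continuousOn).mono hsubIoo
    · intro x hx
      rw [interior_Icc] at hx
      exact hd1pos x hx
  have hlt : y c < y (c + ε/2) := by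
    apply hmono2 (left_mem_Icc.2 (by linarith)) (right_mem_Icc.2 (by linarith))
    linarith
  have : c + ε/2 ∈ Icc (0:ℝ) 1 :=
    Ioo_subset_Icc_self (hsubIoo (right_mem_Icc.2 (by linarith)))
  exact absurd (hmax this) (not_le.2 hlt)

theorem stmt13 (y : ℝ → ℝ)
    (hcont : ContinuousOn y (Icc (0:ℝ) 1))
    (hsmooth : ContDiffOn ℝ ⊤ y (Ioo (0:ℝ) 1))
    (hL2 : MemLp y 2 (volume.restrict (Ioo (0:ℝ) 1)))
    (hL2' : MemLp (deriv y) 2 (volume.restrict (Ioo (0:ℝ) 1)))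
    (h0 : y 0 = 0) (h1 : y 1 = 0)
    (hsym : ∀ x ∈ Icc (0:ℝ) 1, y (1 - x) = y x)
    (hode : ∀ x ∈ Ioo (0:ℝ) 1,
      deriv (deriv y) x + (2 / x - 2 / (1 - x)) * deriv y x
        - (2 / x ^ 2 + 2 / (1 - x) ^ 2 + 4 / x + 4 / (1 - x)) * y x = 0) :
    ∀ x ∈ Icc (0:ℝ) 1, y x = 0 := by
  have hle := aux13 y hcont hsmooth h0 h1 hode
  have hderneg : deriv (fun x => -y x) = fun x => -deriv y x := funext fun x => deriv.fun_neg
  have hge := aux13 (fun x => -y x) hcont.neg hsmooth.neg (by simp [h0]) (by simp [h1])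
    (by
      intro x hx
      rw [hderneg]
      rw [show deriv (fun x => -deriv y x) x = -deriv (deriv y) x from deriv.fun_neg]
      have := hode x hx
      ring_nf
      ring_nf at this
      linarith)
  intro x hx
  have := hle x hx
  have := hge x hx
  linarith
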